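/- Let 0 < λ_l < λ_u be reals, n ≥ 1 an integer, d = (λ_l + λ_u)/(λ_u − λ_l), and for m = 1, …, n set r_m = (λ_l + λ_u − (λ_u − λ_l)·cos((2m − 1)π/(2n)))/2 and c_m = 1/r_m. Then for every λ ∈ [λ_l, λ_u], ∏_{m=1}^{n} (1 − c_m λ)² ≤ 1/T_n(d)², and equality holds at λ = λ_l; hence the supremum over λ ∈ [λ_l, λ_u] of ∏_{m=1}^{n} (1 − c_m λ)² equals exactly 1/T_n(d)². -/

import Mathlib

open Real Polynomial Finset


lemma two_poly : (2:ℝ[X]) = C 2 := by rw [map_ofNat]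

lemma cheb_deg_lc (n : ℕ) : (Chebyshev.T ℝ (n : ℤ)).degree = n ∧
    (Chebyshev.T ℝ (n : ℤ)).leadingCoeff = 2 ^ (n - 1) := by
  have key : ∀ n : ℕ, ((Chebyshev.T ℝ (n : ℤ)).degree = n ∧
      (Chebyshev.T ℝ (n : ℤ)).leadingCoeff = 2 ^ (n - 1)) ∧
      ((Chebyshev.T ℝ (((n+1) : ℕ) : ℤ)).degree = ((n+1 : ℕ) : ℕ) ∧
      (Chebyshev.T ℝ (((n+1) : ℕ) : ℤ)).leadingCoeff = 2 ^ n) := by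
    intro n
    induction n with
    | zero =>
      refine ⟨⟨?_, ?_⟩, ?_, ?_⟩ <;>
        simp [Chebyshev.T_zero, Chebyshev.T_one, leadingCoeff]
    | succ k ih =>
      obtain ⟨⟨hd0, hl0⟩, hd1, hl1⟩ := ih
      refine ⟨⟨hd1, by simpa using hl1⟩, ?_⟩
      have heq : Chebyshev.T ℝ (((k+2 : ℕ)) : ℤ) =
          2 * X * Chebyshev.T ℝ (((k+1 : ℕ)) : ℤ) - Chebyshev.T ℝ ((k : ℕ) : ℤ) := by
        push_cast
        exact Chebyshev.T_add_two ℝ (k : ℤ)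
      have hdm : (2 * X * Chebyshev.T ℝ (((k+1 : ℕ)) : ℤ)).degree = ((k+2 : ℕ) : WithBot ℕ) := by
        rw [degree_mul, degree_mul, hd1, two_poly, degree_C (by norm_num), degree_X]
        push_cast
        ring
      have hlt : (Chebyshev.T ℝ ((k : ℕ) : ℤ)).degree
          < (2 * X * Chebyshev.T ℝ (((k+1 : ℕ)) : ℤ)).degree := by
        rw [hdm, hd0]
        exact_mod_cast Nat.lt_add_of_pos_right (by norm_num)
      constructor
      · rw [heq, degree_sub_eq_left_of_degree_lt hlt, hdm]
      · rw [heq, leadingCoeff_sub_of_degree_lt hlt, leadingCoeff_mul, leadingCoeff_mul,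
          hl1, two_poly, leadingCoeff_C, leadingCoeff_X]
        ring
  exact (key n).1


lemma theta_mem {n m : ℕ} (hn : 1 ≤ n) (hm : m ∈ Finset.Icc 1 n) :
    (2 * (m : ℝ) - 1) * π / (2 * n) ∈ Set.Icc 0 π := by
  obtain ⟨hm1, hm2⟩ := Finset.mem_Icc.mp hm
  have hnp : (0:ℝ) < n := by exact_mod_cast Nat.lt_of_lt_of_le Nat.zero_lt_one hn
  have hm1' : (1:ℝ) ≤ m := by exact_mod_cast hm1
  have hm2' : (m:ℝ) ≤ n := by exact_mod_cast hm2
  have hpi := Real.pi_pos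
  constructor
  · apply div_nonneg (mul_nonneg (by linarith) hpi.le) (by linarith)
  · rw [div_le_iff₀ (by linarith)]
    nlinarith

lemma inj_on_nodes (n : ℕ) (hn : 1 ≤ n) :
    Set.InjOn (fun m : ℕ => Real.cos ((2 * (m : ℝ) - 1) * π / (2 * n)))
      (Finset.Icc 1 n : Finset ℕ) := by
  intro m1 hm1 m2 hm2 h
  have hnp : (0:ℝ) < n := by exact_mod_cast Nat.lt_of_lt_of_le Nat.zero_lt_one hn
  have hpi := Real.pi_pos
  have hth := Real.injOn_cos (theta_mem hn hm1) (theta_mem hn hm2) h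
  have h3 : (2 * (m1 : ℝ) - 1) * (π / (2 * n)) = (2 * (m2 : ℝ) - 1) * (π / (2 * n)) := by
    rw [← mul_div_assoc, ← mul_div_assoc]
    exact hth
  have h4 := mul_right_cancel₀ (show π / (2 * (n:ℝ)) ≠ 0 by positivity) h3
  have : (m1 : ℝ) = m2 := by linarith
  exact_mod_cast this

lemma cheb_root {n m : ℕ} (hn : 1 ≤ n) (hm : m ∈ Finset.Icc 1 n) :
    (Chebyshev.T ℝ (n : ℤ)).eval (Real.cos ((2 * (m : ℝ) - 1) * π / (2 * n))) = 0 := by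
  obtain ⟨hm1, hm2⟩ := Finset.mem_Icc.mp hm
  have hnp : (0:ℝ) < n := by exact_mod_cast Nat.lt_of_lt_of_le Nat.zero_lt_one hn
  rw [Polynomial.Chebyshev.T_real_cos]
  have harg : ((n : ℤ) : ℝ) * ((2 * (m : ℝ) - 1) * π / (2 * n)) = ((m - 1 : ℕ) : ℝ) * π + π / 2 := by
    have : ((m - 1 : ℕ) : ℝ) = (m : ℝ) - 1 := by
      push_cast [Nat.cast_sub hm1]
      ring
    rw [this]
    push_cast
    field_simp
    ring
  rw [harg, Real.cos_add, Real.cos_pi_div_two, Real.sin_nat_mul_pi]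
  ring

lemma cheb_factor (n : ℕ) (hn : 1 ≤ n) :
    Chebyshev.T ℝ (n : ℤ) = Polynomial.C ((2:ℝ) ^ (n - 1)) *
      ∏ m ∈ Finset.Icc 1 n, (X - Polynomial.C (Real.cos ((2 * (m : ℝ) - 1) * π / (2 * n)))) := by
  obtain ⟨hdT, hlT⟩ := cheb_deg_lc n
  set q : ℝ[X] := Polynomial.C ((2:ℝ) ^ (n - 1)) *
      ∏ m ∈ Finset.Icc 1 n, (X - Polynomial.C (Real.cos ((2 * (m : ℝ) - 1) * π / (2 * n)))) with hq
  have hmonic : (∏ m ∈ Finset.Icc 1 n,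
      (X - Polynomial.C (Real.cos ((2 * (m : ℝ) - 1) * π / (2 * n))))).Monic :=
    monic_prod_of_monic _ _ fun m _ => monic_X_sub_C _
  have hdq : q.degree = (n : WithBot ℕ) := by
    rw [hq, degree_mul, degree_C (by positivity), degree_prod]
    simp [degree_X_sub_C, Nat.card_Icc]
  have hlq : q.leadingCoeff = 2 ^ (n - 1) := by
    rw [hq, leadingCoeff_mul, hmonic.leadingCoeff, leadingCoeff_C, mul_one]
  have hT0 : Chebyshev.T ℝ (n : ℤ) ≠ 0 := by
    intro h
    rw [h, degree_zero] at hdT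
    exact absurd hdT.symm (by simp)
  apply Polynomial.eq_of_degree_sub_lt_of_eval_index_eq (Finset.Icc 1 n) (inj_on_nodes n hn)
  · rw [Nat.card_Icc]
    have : (Chebyshev.T ℝ (n : ℤ) - q).degree < (n : WithBot ℕ) := by
      rw [← hdT]
      exact degree_sub_lt (hdT.trans hdq.symm) hT0 (hlT.trans hlq.symm)
    simpa using this
  · intro m hm
    rw [cheb_root hn hm, hq]
    rw [eval_mul, eval_prod]
    rw [Finset.prod_eq_zero hm (by simp)]
    ring

lemma cheb_eval_eq (n : ℕ) (hn : 1 ≤ n) (x : ℝ) :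
    (Chebyshev.T ℝ (n : ℤ)).eval x = (2:ℝ) ^ (n - 1) *
      ∏ m ∈ Finset.Icc 1 n, (x - Real.cos ((2 * (m : ℝ) - 1) * π / (2 * n))) := by
  rw [cheb_factor n hn, eval_mul, eval_C, eval_prod]
  simp

/-- Achievability half of Proposition 1: the Chebyshev-node step sizes `c_m = 1/r_m` give a
squared contraction factor at most `1/T_n(d)²` for every eigenvalue `λ ∈ [λ_l, λ_u]`, with
equality at `λ = λ_l`; hence the supremum over `[λ_l, λ_u]` equals `1/T_n(d)²`. -/
theorem contraction_sup_achieved_by_chebyshev_nodes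
    (lamL lamU : ℝ) (h0 : 0 < lamL) (h1 : lamL < lamU) (n : ℕ) (hn : 1 ≤ n) :
    (∀ lam ∈ Set.Icc lamL lamU,
      ∏ m ∈ Finset.Icc 1 n,
          (1 - (1 / ((lamL + lamU - (lamU - lamL) *
              Real.cos ((2 * (m : ℝ) - 1) * Real.pi / (2 * (n : ℝ)))) / 2)) * lam) ^ 2 ≤
        1 / ((Polynomial.Chebyshev.T ℝ (n : ℤ)).eval ((lamL + lamU) / (lamU - lamL))) ^ 2) ∧
    (∏ m ∈ Finset.Icc 1 n,
        (1 - (1 / ((lamL + lamU - (lamU - lamL) *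
            Real.cos ((2 * (m : ℝ) - 1) * Real.pi / (2 * (n : ℝ)))) / 2)) * lamL) ^ 2 =
      1 / ((Polynomial.Chebyshev.T ℝ (n : ℤ)).eval ((lamL + lamU) / (lamU - lamL))) ^ 2) ∧
    sSup ((fun lam : ℝ =>
        ∏ m ∈ Finset.Icc 1 n,
          (1 - (1 / ((lamL + lamU - (lamU - lamL) *
              Real.cos ((2 * (m : ℝ) - 1) * Real.pi / (2 * (n : ℝ)))) / 2)) * lam) ^ 2) ''
        Set.Icc lamL lamU) =
      1 / ((Polynomial.Chebyshev.T ℝ (n : ℤ)).eval ((lamL + lamU) / (lamU - lamL))) ^ 2 := by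
  have hΔ : (0:ℝ) < lamU - lamL := by linarith
  set Δ : ℝ := lamU - lamL with hΔdef
  set s : ℝ := lamL + lamU with hsdef
  set d : ℝ := s / Δ with hddef
  have hd1 : 1 < d := by
    rw [hddef, lt_div_iff₀ hΔ]
    simp only [hsdef, hΔdef]
    linarith
  set a : ℕ → ℝ := fun m => Real.cos ((2 * (m : ℝ) - 1) * Real.pi / (2 * (n : ℝ))) with hadef
  have ha_le : ∀ m, a m ∈ Set.Icc (-1:ℝ) 1 := fun m => ⟨Real.neg_one_le_cos _, Real.cos_le_one _⟩
  have hda_pos : ∀ m, 0 < d - a m := fun m => by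
    have := (ha_le m).2; linarith
  -- value of T at d
  have hTd : (Polynomial.Chebyshev.T ℝ (n : ℤ)).eval d =
      (2:ℝ) ^ (n-1) * ∏ m ∈ Finset.Icc 1 n, (d - a m) := cheb_eval_eq n hn d
  have hPd_pos : (0:ℝ) < ∏ m ∈ Finset.Icc 1 n, (d - a m) :=
    Finset.prod_pos fun m _ => hda_pos m
  have hTd_pos : 0 < (Polynomial.Chebyshev.T ℝ (n : ℤ)).eval d := by
    rw [hTd]; positivity
  -- the product identity
  have key : ∀ lam : ℝ,
      ∏ m ∈ Finset.Icc 1 n, (1 - (1 / ((s - Δ * a m) / 2)) * lam) ^ 2 =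
        ((Polynomial.Chebyshev.T ℝ (n : ℤ)).eval ((s - 2*lam)/Δ))^2 /
          ((Polynomial.Chebyshev.T ℝ (n : ℤ)).eval d)^2 := by
    intro lam
    set t : ℝ := (s - 2*lam)/Δ with htdef
    have hfac : ∀ m ∈ Finset.Icc 1 n,
        (1 - (1 / ((s - Δ * a m) / 2)) * lam) ^ 2 = ((t - a m)/(d - a m))^2 := by
      intro m _
      have hR : (s - Δ * a m) / 2 = (Δ/2) * (d - a m) := by
        field_simp [hddef]
        linarith [show Δ * d = s by rw [hddef]; field_simp]
      have hnum : (s - Δ * a m) / 2 - lam = (Δ/2) * (t - a m) := by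
        rw [htdef]
        field_simp
        ring
      have hRne : (s - Δ * a m) / 2 ≠ 0 := by
        rw [hR]; exact (mul_pos (by positivity) (hda_pos m)).ne' 
      congr 1
      have hsplit : 1 - 1 / ((s - Δ * a m) / 2) * lam =
          ((s - Δ * a m) / 2 - lam) / ((s - Δ * a m) / 2) := by
        have hne2 : s - Δ * a m ≠ 0 := by
          intro h; exact hRne (by rw [h]; norm_num)
        field_simp
      rw [hsplit, hnum, hR, mul_div_mul_left _ _ (by positivity : (Δ/2) ≠ 0)]
    rw [Finset.prod_congr rfl hfac]
    rw [hTd, cheb_eval_eq n hn t]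
    rw [mul_pow, mul_pow, mul_div_mul_left _ _ (by positivity : ((2:ℝ)^(n-1))^2 ≠ 0)]
    simp_rw [div_pow]
    rw [Finset.prod_div_distrib, Finset.prod_pow, Finset.prod_pow]
  have hbound : ∀ lam ∈ Set.Icc lamL lamU,
      ∏ m ∈ Finset.Icc 1 n, (1 - (1 / ((s - Δ * a m) / 2)) * lam) ^ 2 ≤
        1 / ((Polynomial.Chebyshev.T ℝ (n : ℤ)).eval d) ^ 2 := by
    intro lam hlam
    rw [key lam]
    rw [div_le_div_iff_of_pos_right (pow_pos hTd_pos 2)]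
    set t : ℝ := (s - 2*lam)/Δ with htdef
    have ht1 : -1 ≤ t := by
      rw [htdef, le_div_iff₀ hΔ]
      simp only [hsdef, hΔdef]
      have := hlam.2
      linarith
    have ht2 : t ≤ 1 := by
      rw [htdef, div_le_one hΔ]
      simp only [hsdef, hΔdef]
      have := hlam.1
      linarith
    have hcos : t = Real.cos (Real.arccos t) := (Real.cos_arccos ht1 ht2).symm
    rw [hcos, Polynomial.Chebyshev.T_real_cos]
    rw [sq_le_one_iff_abs_le_one]
    exact Real.abs_cos_le_one _
  have heq : ∏ m ∈ Finset.Icc 1 n, (1 - (1 / ((s - Δ * a m) / 2)) * lamL) ^ 2 =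
      1 / ((Polynomial.Chebyshev.T ℝ (n : ℤ)).eval d) ^ 2 := by
    rw [key lamL]
    have ht : (s - 2*lamL)/Δ = 1 := by
      rw [div_eq_one_iff_eq hΔ.ne']
      simp only [hsdef, hΔdef]
      ring
    rw [ht]
    have h1' : (1:ℝ) = Real.cos 0 := by simp
    rw [h1', Polynomial.Chebyshev.T_real_cos]
    norm_num
  refine ⟨hbound, heq, ?_⟩
  apply IsGreatest.csSup_eq
  constructor
  · exact ⟨lamL, ⟨le_refl _, h1.le⟩, heq⟩
  · rintro x ⟨lam, hlam, rfl⟩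
    exact hbound lam hlam
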